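/- Let E₁ and E₂ be complex Hilbert spaces, let A₁ be a bounded selfadjoint invertible operator on E₁, let A₂ be a bounded selfadjoint invertible operator on E₂, and let V : E₁ → E₂ be a bounded operator satisfying ‖V‖·√(‖A₁⁻¹‖·‖A₂⁻¹‖) < 1. Then for every t ∈ [0,1] the block operator [[A₁, tV*], [tV, A₂]] on the Hilbert space direct sum E₁ ⊕ E₂ is invertible. -/

import Mathlib

open ContinuousLinearMap in
/-- The block operator `[[A, B], [C, D]]` on the Hilbert space direct sum `E ⊕ F`
(realized as `WithLp 2 (E × F)`), acting by `(x, y) ↦ (A x + B y, C x + D y)`. -/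
noncomputable def blockOp {E F : Type*} [NormedAddCommGroup E] [InnerProductSpace ℂ E]
    [NormedAddCommGroup F] [InnerProductSpace ℂ F]
    (A : E →L[ℂ] E) (B : F →L[ℂ] E) (C : E →L[ℂ] F) (D : F →L[ℂ] F) :
    WithLp 2 (E × F) →L[ℂ] WithLp 2 (E × F) :=
  ((WithLp.prodContinuousLinearEquiv 2 ℂ E F).symm.toContinuousLinearMap.comp
    ((A.comp (fst ℂ E F) + B.comp (snd ℂ E F)).prod
      (C.comp (fst ℂ E F) + D.comp (snd ℂ E F)))).comp
    (WithLp.prodContinuousLinearEquiv 2 ℂ E F).toContinuousLinearMap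


section Aux
set_option linter.unusedSectionVars false
variable {E F : Type*} [NormedAddCommGroup E] [InnerProductSpace ℂ E]
    [NormedAddCommGroup F] [InnerProductSpace ℂ F]

lemma blockOp_apply_fst (A : E →L[ℂ] E) (B : F →L[ℂ] E) (C : E →L[ℂ] F) (D : F →L[ℂ] F)
    (z : WithLp 2 (E × F)) : (blockOp A B C D z).fst = A z.fst + B z.snd := by
  simp [blockOp]

lemma blockOp_apply_snd (A : E →L[ℂ] E) (B : F →L[ℂ] E) (C : E →L[ℂ] F) (D : F →L[ℂ] F)
    (z : WithLp 2 (E × F)) : (blockOp A B C D z).snd = C z.fst + D z.snd := by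
  simp [blockOp]

lemma withlp_ext {z w : WithLp 2 (E × F)} (h1 : z.fst = w.fst) (h2 : z.snd = w.snd) : z = w :=
  WithLp.ofLp_injective 2 (Prod.ext h1 h2)

lemma blockOp_mul (A A' : E →L[ℂ] E) (B B' : F →L[ℂ] E) (C C' : E →L[ℂ] F) (D D' : F →L[ℂ] F) :
    blockOp A B C D * blockOp A' B' C' D'
      = blockOp (A.comp A' + B.comp C') (A.comp B' + B.comp D')
          (C.comp A' + D.comp C') (C.comp B' + D.comp D') :=
  ContinuousLinearMap.ext fun z => withlp_ext
    (by simp [ContinuousLinearMap.mul_apply, blockOp_apply_fst, blockOp_apply_snd]; abel)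
    (by simp [ContinuousLinearMap.mul_apply, blockOp_apply_fst, blockOp_apply_snd]; abel)

lemma blockOp_one : blockOp (1 : E →L[ℂ] E) 0 0 (1 : F →L[ℂ] F) = 1 :=
  ContinuousLinearMap.ext fun z => withlp_ext
    (by simp [blockOp_apply_fst]) (by simp [blockOp_apply_snd])

lemma blockOp_add (A A' : E →L[ℂ] E) (B B' : F →L[ℂ] E) (C C' : E →L[ℂ] F) (D D' : F →L[ℂ] F) :
    blockOp A B C D + blockOp A' B' C' D' = blockOp (A + A') (B + B') (C + C') (D + D') :=
  ContinuousLinearMap.ext fun z => withlp_ext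
    (by simp [blockOp_apply_fst]; abel) (by simp [blockOp_apply_snd]; abel)

lemma blockOp_diag_norm_le (A : E →L[ℂ] E) (D : F →L[ℂ] F) {c : ℝ} (hc : 0 ≤ c)
    (hA : ‖A‖ ≤ c) (hD : ‖D‖ ≤ c) : ‖blockOp A 0 0 D‖ ≤ c := by
  refine ContinuousLinearMap.opNorm_le_bound _ hc fun z => ?_
  have h1 : ‖blockOp A 0 0 D z‖ ^ 2 ≤ (c * ‖z‖) ^ 2 := by
    rw [WithLp.prod_norm_sq_eq_of_L2, blockOp_apply_fst, blockOp_apply_snd]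
    simp only [ContinuousLinearMap.zero_apply, add_zero, zero_add]
    have hAz : ‖A z.fst‖ ^ 2 ≤ (c * ‖z.fst‖) ^ 2 :=
      pow_le_pow_left₀ (norm_nonneg _)
        ((A.le_opNorm z.fst).trans (mul_le_mul_of_nonneg_right hA (norm_nonneg _))) 2
    have hDz : ‖D z.snd‖ ^ 2 ≤ (c * ‖z.snd‖) ^ 2 :=
      pow_le_pow_left₀ (norm_nonneg _)
        ((D.le_opNorm z.snd).trans (mul_le_mul_of_nonneg_right hD (norm_nonneg _))) 2
    calc ‖A z.fst‖ ^ 2 + ‖D z.snd‖ ^ 2 ≤ (c * ‖z.fst‖) ^ 2 + (c * ‖z.snd‖) ^ 2 :=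
          add_le_add hAz hDz
      _ = (c * ‖z‖) ^ 2 := by rw [mul_pow, mul_pow, mul_pow, WithLp.prod_norm_sq_eq_of_L2]; ring
  have := Real.sqrt_le_sqrt h1
  rwa [Real.sqrt_sq (norm_nonneg _), Real.sqrt_sq (by positivity)] at this

end Aux

set_option maxHeartbeats 1000000 in
/-- Decoupling lemma: if `A₁`, `A₂` are bounded selfadjoint invertible operators and
`V : E₁ → E₂` satisfies `‖V‖·√(‖A₁⁻¹‖·‖A₂⁻¹‖) < 1`, then for every `t ∈ [0,1]` the block
operator `[[A₁, tV*], [tV, A₂]]` on `E₁ ⊕ E₂` is invertible. -/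
theorem block_decoupling_invertible {E₁ E₂ : Type*}
    [NormedAddCommGroup E₁] [InnerProductSpace ℂ E₁] [CompleteSpace E₁]
    [NormedAddCommGroup E₂] [InnerProductSpace ℂ E₂] [CompleteSpace E₂]
    (A₁ : E₁ →L[ℂ] E₁) (A₂ : E₂ →L[ℂ] E₂) (V : E₁ →L[ℂ] E₂)
    (hA₁ : IsSelfAdjoint A₁) (hA₂ : IsSelfAdjoint A₂)
    (hA₁inv : IsUnit A₁) (hA₂inv : IsUnit A₂)
    (hV : ‖V‖ * Real.sqrt (‖Ring.inverse A₁‖ * ‖Ring.inverse A₂‖) < 1) :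
    ∀ t ∈ Set.Icc (0 : ℝ) 1,
      IsUnit (blockOp A₁ ((t : ℂ) • ContinuousLinearMap.adjoint V) ((t : ℂ) • V) A₂) := by
  rintro t ⟨ht0, ht1⟩
  set A₁' := Ring.inverse A₁ with hA₁'
  set A₂' := Ring.inverse A₂ with hA₂'
  have h11 : A₁ * A₁' = 1 := Ring.mul_inverse_cancel _ hA₁inv
  have h11' : A₁' * A₁ = 1 := Ring.inverse_mul_cancel _ hA₁inv
  have h22 : A₂ * A₂' = 1 := Ring.mul_inverse_cancel _ hA₂inv
  have h22' : A₂' * A₂ = 1 := Ring.inverse_mul_cancel _ hA₂inv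
  set B : E₂ →L[ℂ] E₁ := (t : ℂ) • ContinuousLinearMap.adjoint V with hB
  set C : E₁ →L[ℂ] E₂ := (t : ℂ) • V with hC
  set M := blockOp A₁ B C A₂ with hM
  set D := blockOp A₁ 0 0 A₂ with hD
  set D' := blockOp A₁' 0 0 A₂' with hD'
  have hDD' : D * D' = 1 := by
    rw [hD, hD', blockOp_mul]
    simp only [ContinuousLinearMap.comp_zero, ContinuousLinearMap.zero_comp,
      add_zero, zero_add]
    rw [show A₁.comp A₁' = A₁ * A₁' from rfl, show A₂.comp A₂' = A₂ * A₂' from rfl,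
      h11, h22, blockOp_one]
  have hD'D : D' * D = 1 := by
    rw [hD, hD', blockOp_mul]
    simp only [ContinuousLinearMap.comp_zero, ContinuousLinearMap.zero_comp,
      add_zero, zero_add]
    rw [show A₁'.comp A₁ = A₁' * A₁ from rfl, show A₂'.comp A₂ = A₂' * A₂ from rfl,
      h11', h22', blockOp_one]
  have hDunit : IsUnit D := isUnit_iff_exists.mpr ⟨D', hDD', hD'D⟩
  set X : WithLp 2 (E₁ × E₂) →L[ℂ] WithLp 2 (E₁ × E₂) :=
    blockOp 0 (A₁'.comp B) (A₂'.comp C) 0 with hX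
  have hD'M : D' * M = 1 + X := by
    rw [hD', hM, blockOp_mul, hX, ← blockOp_one, blockOp_add]
    simp only [ContinuousLinearMap.comp_zero, ContinuousLinearMap.zero_comp,
      add_zero, zero_add]
    rw [show A₁'.comp A₁ = A₁' * A₁ from rfl, show A₂'.comp A₂ = A₂' * A₂ from rfl, h11', h22']
  -- norm bound on X^2
  set c : ℝ := ‖V‖ ^ 2 * (‖A₁'‖ * ‖A₂'‖) with hc
  have hc0 : 0 ≤ c := by positivity
  have hc1 : c < 1 := by
    have h0 : 0 ≤ ‖V‖ * Real.sqrt (‖A₁'‖ * ‖A₂'‖) := by positivity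
    have := pow_lt_one₀ h0 hV two_ne_zero
    rwa [mul_pow, Real.sq_sqrt (by positivity)] at this
  have hnB : ‖B‖ ≤ ‖V‖ := by
    have h := norm_smul ((t : ℂ)) (ContinuousLinearMap.adjoint V)
    rw [hB, h, Complex.norm_real, Real.norm_eq_abs, abs_of_nonneg ht0,
      LinearIsometryEquiv.norm_map]
    nlinarith [norm_nonneg V]
  have hnC : ‖C‖ ≤ ‖V‖ := by
    have h := norm_smul ((t : ℂ)) V
    rw [hC, h, Complex.norm_real, Real.norm_eq_abs, abs_of_nonneg ht0]
    nlinarith [norm_nonneg V]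
  have hXXform : X * X = blockOp ((A₁'.comp B).comp (A₂'.comp C)) 0 0
      ((A₂'.comp C).comp (A₁'.comp B)) := by
    rw [hX, blockOp_mul]
    simp only [ContinuousLinearMap.comp_zero, ContinuousLinearMap.zero_comp,
      add_zero, zero_add]
  have hblock1 : ‖(A₁'.comp B).comp (A₂'.comp C)‖ ≤ c := by
    calc ‖(A₁'.comp B).comp (A₂'.comp C)‖ ≤ ‖A₁'.comp B‖ * ‖A₂'.comp C‖ :=
          ContinuousLinearMap.opNorm_comp_le _ _
      _ ≤ (‖A₁'‖ * ‖B‖) * (‖A₂'‖ * ‖C‖) := by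
          apply mul_le_mul (ContinuousLinearMap.opNorm_comp_le _ _)
            (ContinuousLinearMap.opNorm_comp_le _ _) (norm_nonneg _) (by positivity)
      _ ≤ (‖A₁'‖ * ‖V‖) * (‖A₂'‖ * ‖V‖) :=
          mul_le_mul (mul_le_mul_of_nonneg_left hnB (norm_nonneg _))
            (mul_le_mul_of_nonneg_left hnC (norm_nonneg _)) (by positivity) (by positivity)
      _ = c := by rw [hc]; ring
  have hblock2 : ‖(A₂'.comp C).comp (A₁'.comp B)‖ ≤ c := by
    calc ‖(A₂'.comp C).comp (A₁'.comp B)‖ ≤ ‖A₂'.comp C‖ * ‖A₁'.comp B‖ :=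
          ContinuousLinearMap.opNorm_comp_le _ _
      _ ≤ (‖A₂'‖ * ‖C‖) * (‖A₁'‖ * ‖B‖) := by
          apply mul_le_mul (ContinuousLinearMap.opNorm_comp_le _ _)
            (ContinuousLinearMap.opNorm_comp_le _ _) (norm_nonneg _) (by positivity)
      _ ≤ (‖A₂'‖ * ‖V‖) * (‖A₁'‖ * ‖V‖) :=
          mul_le_mul (mul_le_mul_of_nonneg_left hnC (norm_nonneg _))
            (mul_le_mul_of_nonneg_left hnB (norm_nonneg _)) (by positivity) (by positivity)
      _ = c := by rw [hc]; ring
  have hXX : ‖X * X‖ < 1 := by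
    rw [hXXform]
    exact lt_of_le_of_lt (blockOp_diag_norm_le _ _ hc0 hblock1 hblock2) hc1
  -- 1 + X is a unit
  set u : (WithLp 2 (E₁ × E₂) →L[ℂ] WithLp 2 (E₁ × E₂))ˣ := Units.oneSub (X * X) hXX with hu
  have huval : (u : WithLp 2 (E₁ × E₂) →L[ℂ] WithLp 2 (E₁ × E₂)) = 1 - X * X := rfl
  have hcommX : Commute X (u : WithLp 2 (E₁ × E₂) →L[ℂ] WithLp 2 (E₁ × E₂)) := by
    rw [huval]
    exact (Commute.one_right X).sub_right (by exact (Commute.refl X).mul_right (Commute.refl X))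
  have hcommXinv : Commute X ((u⁻¹ : _ˣ) : WithLp 2 (E₁ × E₂) →L[ℂ] WithLp 2 (E₁ × E₂)) :=
    hcommX.units_inv_right
  have key1 : (1 + X) * (1 - X) = 1 - X * X := by
    rw [add_mul, one_mul, mul_one_sub]; abel
  have key2 : (1 - X) * (1 + X) = 1 - X * X := by
    rw [sub_mul, one_mul, mul_one_add]; abel
  have h1Xunit : IsUnit (1 + X) := by
    refine isUnit_iff_exists.mpr ⟨(1 - X) * ((u⁻¹ : _ˣ) : _), ?_, ?_⟩
    · calc (1 + X) * ((1 - X) * ((u⁻¹ : _ˣ) : _)) = ((1 + X) * (1 - X)) * ((u⁻¹ : _ˣ) : _) := by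
            rw [mul_assoc]
        _ = (u : _) * ((u⁻¹ : _ˣ) : _) := by rw [huval, key1]
        _ = 1 := u.mul_inv
    · calc ((1 - X) * ((u⁻¹ : _ˣ) : _)) * (1 + X)
          = (1 - X) * (((u⁻¹ : _ˣ) : _) * (1 + X)) := by rw [mul_assoc]
        _ = (1 - X) * ((1 + X) * ((u⁻¹ : _ˣ) : _)) := by
            congr 1
            exact ((Commute.one_left _).add_left hcommXinv).eq.symm
        _ = ((1 - X) * (1 + X)) * ((u⁻¹ : _ˣ) : _) := by rw [mul_assoc]
        _ = (u : _) * ((u⁻¹ : _ˣ) : _) := by rw [huval, key2]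
        _ = 1 := u.mul_inv
  have hMfact : M = D * (1 + X) := by
    rw [← hD'M, ← mul_assoc, hDD', one_mul]
  rw [hMfact]
  exact hDunit.mul h1Xunit
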